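/- The map F from the abstract Lie algebra generated by elements L_{kl}, M_{kl}, N_{kl}, R_{kl} (k,l = 1,...,N) with bracket (1/i)[·,·] and relations (1/i)[L_{kl},L_{mn}]=0, (1/i)[L_{kl},M_{mn}]=2ℏδ_{kn}L_{ml}, (1/i)[L_{kl},N_{mn}]=2ℏδ_{ml}L_{kn}, (1/i)[L_{kl},R_{mn}]=2ℏ(δ_{kn}N_{ml}+δ_{ml}M_{kn}), (1/i)[M_{kl},M_{mn}]=2ℏ(δ_{kn}M_{ml}−δ_{ml}M_{kn}), (1/i)[M_{kl},N_{mn}]=0, (1/i)[M_{kl},R_{mn}]=2ℏδ_{kn}R_{ml}, (1/i)[N_{kl},N_{mn}]=2ℏ(δ_{ml}N_{kn}−δ_{kn}N_{ml}), (1/i)[N_{kl},R_{mn}]=2ℏδ_{ml}R_{kn}, (1/i)[R_{kl},R_{mn}]=0, into gl(2N,ℂ), defined by F(L_{kl}) = (1/i)·block[[−E_{kl}, iE_{kl}],[iE_{kl}, E_{kl}]], F(M_{kl}) = (ℏ/i)·block[[−iE_{kl}, E_{kl}],[−E_{kl}, −iE_{kl}]], F(N_{kl}) = (ℏ/i)·block[[iE_{kl},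 E_{kl}],[−E_{kl}, iE_{kl}]], F(R_{kl}) = (ℏ²/i)·block[[−E_{kl}, −iE_{kl}],[−iE_{kl}, E_{kl}]], is a homomorphism of complex Lie algebras: F((1/i)[X,Y]) = [F(X),F(Y)] for all generators X,Y. -/

import Mathlib

open Matrix Complex

noncomputable section

/-- Matrix units `E_{kl}` of `gl(N,ℂ)`. -/
def Ekl (N : ℕ) (k l : Fin N) : Matrix (Fin N) (Fin N) ℂ := Matrix.single k l 1

/-- Kronecker delta as a complex scalar. -/
def kd (N : ℕ) (k l : Fin N) : ℂ := if k = l then 1 else 0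

/-- `F(L_{kl}) = (1/i)·[[−E_{kl}, iE_{kl}],[iE_{kl}, E_{kl}]]`. -/
def FL (N : ℕ) (k l : Fin N) : Matrix (Fin N ⊕ Fin N) (Fin N ⊕ Fin N) ℂ :=
  I⁻¹ • fromBlocks (-(Ekl N k l)) (I • Ekl N k l) (I • Ekl N k l) (Ekl N k l)

/-- `F(M_{kl}) = (ℏ/i)·[[−iE_{kl}, E_{kl}],[−E_{kl}, −iE_{kl}]]`. -/
def FM (N : ℕ) (ℏ : ℝ) (k l : Fin N) : Matrix (Fin N ⊕ Fin N) (Fin N ⊕ Fin N) ℂ :=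
  ((ℏ : ℂ) / I) • fromBlocks (-(I • Ekl N k l)) (Ekl N k l) (-(Ekl N k l)) (-(I • Ekl N k l))

/-- `F(N_{kl}) = (ℏ/i)·[[iE_{kl}, E_{kl}],[−E_{kl}, iE_{kl}]]`. -/
def FNg (N : ℕ) (ℏ : ℝ) (k l : Fin N) : Matrix (Fin N ⊕ Fin N) (Fin N ⊕ Fin N) ℂ :=
  ((ℏ : ℂ) / I) • fromBlocks (I • Ekl N k l) (Ekl N k l) (-(Ekl N k l)) (I • Ekl N k l)

/-- `F(R_{kl}) = (ℏ²/i)·[[−E_{kl}, −iE_{kl}],[−iE_{kl}, E_{kl}]]`. -/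
def FR (N : ℕ) (ℏ : ℝ) (k l : Fin N) : Matrix (Fin N ⊕ Fin N) (Fin N ⊕ Fin N) ℂ :=
  ((ℏ : ℂ) ^ 2 / I) • fromBlocks (-(Ekl N k l)) (-(I • Ekl N k l)) (-(I • Ekl N k l)) (Ekl N k l)

/-- The map `F` intertwines the abstract bracket `(1/i)[·,·]` (given by the defining
relations of the observable Lie algebra) with the matrix commutator `[A,B] = AB − BA`:
applying `F` to each of the ten defining relations yields a valid matrix identity. -/

lemma Emul (N : ℕ) (k l m n : Fin N) :
    Ekl N k l * Ekl N m n = kd N l m • Ekl N k n := by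
  ext i j
  simp [Ekl, kd, Matrix.mul_apply, Matrix.single, ite_and, Finset.sum_ite_eq]
  aesop

/-- Block matrices with all four blocks multiples of a single matrix unit. -/
def blk (N : ℕ) (a b c d : ℂ) (k l : Fin N) : Matrix (Fin N ⊕ Fin N) (Fin N ⊕ Fin N) ℂ :=
  fromBlocks (a • Ekl N k l) (b • Ekl N k l) (c • Ekl N k l) (d • Ekl N k l)

lemma blk_mul (N : ℕ) (a b c d a' b' c' d' : ℂ) (k l m n : Fin N) :
    blk N a b c d k l * blk N a' b' c' d' m n
      = kd N l m • blk N (a*a'+b*c') (a*b'+b*d') (c*a'+d*c') (c*b'+d*d') k n := by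
  simp only [blk, fromBlocks_multiply, Matrix.fromBlocks_smul, Matrix.smul_mul, Matrix.mul_smul,
    Emul, smul_smul, smul_add, add_smul]
  rw [Matrix.fromBlocks_inj]
  refine ⟨by module, by module, by module, by module⟩

lemma kd_comm (N : ℕ) (k l : Fin N) : kd N k l = kd N l k := by
  simp [kd, eq_comm]

lemma comm_blk (N : ℕ) (a b c d a' b' c' d' : ℂ) (k l m n : Fin N) :
    blk N a b c d k l * blk N a' b' c' d' m n - blk N a' b' c' d' m n * blk N a b c d k l
      = kd N m l • blk N (a*a'+b*c') (a*b'+b*d') (c*a'+d*c') (c*b'+d*d') k n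
        - kd N k n • blk N (a'*a+b'*c) (a'*b+b'*d) (c'*a+d'*c) (c'*b+d'*d) m l := by
  rw [blk_mul, blk_mul, kd_comm N l m, kd_comm N n k]

lemma FL_eq (N : ℕ) (k l : Fin N) : FL N k l = blk N I 1 1 (-I) k l := by
  simp only [FL, blk, Matrix.fromBlocks_smul]
  rw [Matrix.fromBlocks_inj]
  refine ⟨?_, ?_, ?_, ?_⟩ <;> match_scalars <;>
    · field_simp
      try ring_nf
      try simp [Complex.I_sq]

lemma FM_eq (N : ℕ) (ℏ : ℝ) (k l : Fin N) :
    FM N ℏ k l = blk N (-ℏ) (-(ℏ*I)) (ℏ*I) (-ℏ) k l := by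
  simp only [FM, blk, Matrix.fromBlocks_smul]
  rw [Matrix.fromBlocks_inj]
  refine ⟨?_, ?_, ?_, ?_⟩ <;> match_scalars <;>
    · field_simp
      try ring_nf
      try simp [Complex.I_sq]

lemma FNg_eq (N : ℕ) (ℏ : ℝ) (k l : Fin N) :
    FNg N ℏ k l = blk N (ℏ) (-(ℏ*I)) (ℏ*I) (ℏ) k l := by
  simp only [FNg, blk, Matrix.fromBlocks_smul]
  rw [Matrix.fromBlocks_inj]
  refine ⟨?_, ?_, ?_, ?_⟩ <;> match_scalars <;>
    · field_simp
      try ring_nf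
      try simp [Complex.I_sq]

lemma FR_eq (N : ℕ) (ℏ : ℝ) (k l : Fin N) :
    FR N ℏ k l = blk N (ℏ^2*I) (-(ℏ^2)) (-(ℏ^2)) (-(ℏ^2*I)) k l := by
  simp only [FR, blk, Matrix.fromBlocks_smul]
  rw [Matrix.fromBlocks_inj]
  refine ⟨?_, ?_, ?_, ?_⟩ <;> match_scalars <;>
    · field_simp
      try ring_nf
      try simp [Complex.I_sq]

set_option maxHeartbeats 2000000 in
theorem stmt0 (N : ℕ) (ℏ : ℝ) (hℏ : 0 < ℏ) (k l m n : Fin N) :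
    (FL N k l * FL N m n - FL N m n * FL N k l = 0) ∧
    (FL N k l * FM N ℏ m n - FM N ℏ m n * FL N k l
        = ((2 * (ℏ : ℂ)) * kd N k n) • FL N m l) ∧
    (FL N k l * FNg N ℏ m n - FNg N ℏ m n * FL N k l
        = ((2 * (ℏ : ℂ)) * kd N m l) • FL N k n) ∧
    (FL N k l * FR N ℏ m n - FR N ℏ m n * FL N k l
        = ((2 * (ℏ : ℂ)) * kd N k n) • FNg N ℏ m l
          + ((2 * (ℏ : ℂ)) * kd N m l) • FM N ℏ k n) ∧
    (FM N ℏ k l * FM N ℏ m n - FM N ℏ m n * FM N ℏ k l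
        = ((2 * (ℏ : ℂ)) * kd N k n) • FM N ℏ m l
          - ((2 * (ℏ : ℂ)) * kd N m l) • FM N ℏ k n) ∧
    (FM N ℏ k l * FNg N ℏ m n - FNg N ℏ m n * FM N ℏ k l = 0) ∧
    (FM N ℏ k l * FR N ℏ m n - FR N ℏ m n * FM N ℏ k l
        = ((2 * (ℏ : ℂ)) * kd N k n) • FR N ℏ m l) ∧
    (FNg N ℏ k l * FNg N ℏ m n - FNg N ℏ m n * FNg N ℏ k l
        = ((2 * (ℏ : ℂ)) * kd N m l) • FNg N ℏ k n
          - ((2 * (ℏ : ℂ)) * kd N k n) • FNg N ℏ m l) ∧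
    (FNg N ℏ k l * FR N ℏ m n - FR N ℏ m n * FNg N ℏ k l
        = ((2 * (ℏ : ℂ)) * kd N m l) • FR N ℏ k n) ∧
    (FR N ℏ k l * FR N ℏ m n - FR N ℏ m n * FR N ℏ k l = 0) := by
  refine ⟨?_, ?_, ?_, ?_, ?_, ?_, ?_, ?_, ?_, ?_⟩
  · rw [FL_eq, FL_eq, comm_blk]
    ext (i|i) (j|j) <;>
      simp only [blk, kd, Matrix.sub_apply, Matrix.add_apply, Matrix.smul_apply,
        Matrix.zero_apply, Matrix.fromBlocks_apply₁₁, Matrix.fromBlocks_apply₁₂,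
        Matrix.fromBlocks_apply₂₁, Matrix.fromBlocks_apply₂₂, Ekl, Matrix.single,
        Matrix.of_apply, smul_eq_mul, mul_ite, mul_one, mul_zero, ite_mul, zero_mul,
        one_mul] <;>
      split_ifs <;> (try ring_nf) <;> (try simp [Complex.I_sq]) <;> (try ring_nf)
  · rw [FL_eq, FL_eq, FM_eq, comm_blk]
    ext (i|i) (j|j) <;>
      simp only [blk, kd, Matrix.sub_apply, Matrix.add_apply, Matrix.smul_apply,
        Matrix.zero_apply, Matrix.fromBlocks_apply₁₁, Matrix.fromBlocks_apply₁₂,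
        Matrix.fromBlocks_apply₂₁, Matrix.fromBlocks_apply₂₂, Ekl, Matrix.single,
        Matrix.of_apply, smul_eq_mul, mul_ite, mul_one, mul_zero, ite_mul, zero_mul,
        one_mul] <;>
      split_ifs <;> (try ring_nf) <;> (try simp [Complex.I_sq]) <;> (try ring_nf)
  · rw [FL_eq, FL_eq, FNg_eq, comm_blk]
    ext (i|i) (j|j) <;>
      simp only [blk, kd, Matrix.sub_apply, Matrix.add_apply, Matrix.smul_apply,
        Matrix.zero_apply, Matrix.fromBlocks_apply₁₁, Matrix.fromBlocks_apply₁₂,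
        Matrix.fromBlocks_apply₂₁, Matrix.fromBlocks_apply₂₂, Ekl, Matrix.single,
        Matrix.of_apply, smul_eq_mul, mul_ite, mul_one, mul_zero, ite_mul, zero_mul,
        one_mul] <;>
      split_ifs <;> (try ring_nf) <;> (try simp [Complex.I_sq]) <;> (try ring_nf)
  · rw [FL_eq, FM_eq, FNg_eq, FR_eq, comm_blk]
    ext (i|i) (j|j) <;>
      simp only [blk, kd, Matrix.sub_apply, Matrix.add_apply, Matrix.smul_apply,
        Matrix.zero_apply, Matrix.fromBlocks_apply₁₁, Matrix.fromBlocks_apply₁₂,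
        Matrix.fromBlocks_apply₂₁, Matrix.fromBlocks_apply₂₂, Ekl, Matrix.single,
        Matrix.of_apply, smul_eq_mul, mul_ite, mul_one, mul_zero, ite_mul, zero_mul,
        one_mul] <;>
      split_ifs <;> (try ring_nf) <;> (try simp [Complex.I_sq]) <;> (try ring_nf)
  · rw [FM_eq, FM_eq, FM_eq, FM_eq, comm_blk]
    ext (i|i) (j|j) <;>
      simp only [blk, kd, Matrix.sub_apply, Matrix.add_apply, Matrix.smul_apply,
        Matrix.zero_apply, Matrix.fromBlocks_apply₁₁, Matrix.fromBlocks_apply₁₂,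
        Matrix.fromBlocks_apply₂₁, Matrix.fromBlocks_apply₂₂, Ekl, Matrix.single,
        Matrix.of_apply, smul_eq_mul, mul_ite, mul_one, mul_zero, ite_mul, zero_mul,
        one_mul] <;>
      split_ifs <;> (try ring_nf) <;> (try simp [Complex.I_sq]) <;> (try ring_nf)
  · rw [FM_eq, FNg_eq, comm_blk]
    ext (i|i) (j|j) <;>
      simp only [blk, kd, Matrix.sub_apply, Matrix.add_apply, Matrix.smul_apply,
        Matrix.zero_apply, Matrix.fromBlocks_apply₁₁, Matrix.fromBlocks_apply₁₂,
        Matrix.fromBlocks_apply₂₁, Matrix.fromBlocks_apply₂₂, Ekl, Matrix.single,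
        Matrix.of_apply, smul_eq_mul, mul_ite, mul_one, mul_zero, ite_mul, zero_mul,
        one_mul] <;>
      split_ifs <;> (try ring_nf) <;> (try simp [Complex.I_sq]) <;> (try ring_nf)
  · rw [FM_eq, FR_eq, FR_eq, comm_blk]
    ext (i|i) (j|j) <;>
      simp only [blk, kd, Matrix.sub_apply, Matrix.add_apply, Matrix.smul_apply,
        Matrix.zero_apply, Matrix.fromBlocks_apply₁₁, Matrix.fromBlocks_apply₁₂,
        Matrix.fromBlocks_apply₂₁, Matrix.fromBlocks_apply₂₂, Ekl, Matrix.single,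
        Matrix.of_apply, smul_eq_mul, mul_ite, mul_one, mul_zero, ite_mul, zero_mul,
        one_mul] <;>
      split_ifs <;> (try ring_nf) <;> (try simp [Complex.I_sq]) <;> (try ring_nf)
  · rw [FNg_eq, FNg_eq, FNg_eq, FNg_eq, comm_blk]
    ext (i|i) (j|j) <;>
      simp only [blk, kd, Matrix.sub_apply, Matrix.add_apply, Matrix.smul_apply,
        Matrix.zero_apply, Matrix.fromBlocks_apply₁₁, Matrix.fromBlocks_apply₁₂,
        Matrix.fromBlocks_apply₂₁, Matrix.fromBlocks_apply₂₂, Ekl, Matrix.single,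
        Matrix.of_apply, smul_eq_mul, mul_ite, mul_one, mul_zero, ite_mul, zero_mul,
        one_mul] <;>
      split_ifs <;> (try ring_nf) <;> (try simp [Complex.I_sq]) <;> (try ring_nf)
  · rw [FNg_eq, FR_eq, FR_eq, comm_blk]
    ext (i|i) (j|j) <;>
      simp only [blk, kd, Matrix.sub_apply, Matrix.add_apply, Matrix.smul_apply,
        Matrix.zero_apply, Matrix.fromBlocks_apply₁₁, Matrix.fromBlocks_apply₁₂,
        Matrix.fromBlocks_apply₂₁, Matrix.fromBlocks_apply₂₂, Ekl, Matrix.single,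
        Matrix.of_apply, smul_eq_mul, mul_ite, mul_one, mul_zero, ite_mul, zero_mul,
        one_mul] <;>
      split_ifs <;> (try ring_nf) <;> (try simp [Complex.I_sq]) <;> (try ring_nf)
  · rw [FR_eq, FR_eq, comm_blk]
    ext (i|i) (j|j) <;>
      simp only [blk, kd, Matrix.sub_apply, Matrix.add_apply, Matrix.smul_apply,
        Matrix.zero_apply, Matrix.fromBlocks_apply₁₁, Matrix.fromBlocks_apply₁₂,
        Matrix.fromBlocks_apply₂₁, Matrix.fromBlocks_apply₂₂, Ekl, Matrix.single,
        Matrix.of_apply, smul_eq_mul, mul_ite, mul_one, mul_zero, ite_mul, zero_mul,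
        one_mul] <;>
      split_ifs <;> (try ring_nf) <;> (try simp [Complex.I_sq]) <;> (try ring_nf)

end
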